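/- Let M be a real symmetric positive definite 2n×2n matrix written in block form M = [[M_XX, M_XP],[M_PX, M_PP]] with n×n blocks (so M_PX = M_XPᵀ, M_XX > 0 and M_PP > 0), and let Ω = {z ∈ ℝ^{2n} : Mz·z ≤ ħ}. Then the image of Ω under the orthogonal projection ℝ^{2n} → ℝⁿ, (x,p) ↦ x, equals {x ∈ ℝⁿ : (M_XX − M_XP M_PP⁻¹ M_PX) x·x ≤ ħ}, and the image of Ω under the orthogonal projection (x,p) ↦ p equals {p ∈ ℝⁿ : (M_PP − M_PX M_XX⁻¹ M_XP) p·p ≤ ħ}. -/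

import Mathlib

open Matrix ComplexOrder MeasureTheory

noncomputable section

/-- Phase space ℝ^{2n} ≃ ℝⁿ × ℝⁿ, with coordinates z = (x,p). -/
abbrev PS (n : ℕ) := Fin n ⊕ Fin n → ℝ

/-- The standard symplectic matrix J = [[0, I], [-I, 0]]. -/
def Jmat (n : ℕ) : Matrix (Fin n ⊕ Fin n) (Fin n ⊕ Fin n) ℝ :=
  Matrix.fromBlocks 0 1 (-1) 0

/-- The standard symplectic form ω(z,z′) = (Jz)·z′. -/
def symp (n : ℕ) (z z' : PS n) : ℝ := (Jmat n).mulVec z ⬝ᵥ z'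

/-- The symplectic group Sp(n) = {S : SᵀJS = J}. -/
def Sp (n : ℕ) : Set (Matrix (Fin n ⊕ Fin n) (Fin n ⊕ Fin n) ℝ) :=
  {S | Sᵀ * Jmat n * S = Jmat n}

/-- Orthogonal projections of the ellipsoid Ω = {z : Mz·z ≤ ℏ} onto the x- and p-spaces
are the ellipsoids determined by the Schur complements M/M_PP and M/M_XX. -/
theorem proj_ellipsoid_schur (n : ℕ) (ℏ : ℝ) (hℏ : 0 < ℏ)
    (Mxx Mxp Mpx Mpp : Matrix (Fin n) (Fin n) ℝ)
    (hM : (Matrix.fromBlocks Mxx Mxp Mpx Mpp).PosDef) :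
    ((fun z : PS n => z ∘ Sum.inl) ''
        {z : PS n | (Matrix.fromBlocks Mxx Mxp Mpx Mpp).mulVec z ⬝ᵥ z ≤ ℏ}
      = {x : Fin n → ℝ | (Mxx - Mxp * Mpp⁻¹ * Mpx).mulVec x ⬝ᵥ x ≤ ℏ}) ∧
    ((fun z : PS n => z ∘ Sum.inr) ''
        {z : PS n | (Matrix.fromBlocks Mxx Mxp Mpx Mpp).mulVec z ⬝ᵥ z ≤ ℏ}
      = {p : Fin n → ℝ | (Mpp - Mpx * Mxx⁻¹ * Mxp).mulVec p ⬝ᵥ p ≤ ℏ}) := by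
  classical
  obtain ⟨hxx, hBC, hCB, hpp⟩ := Matrix.isHermitian_fromBlocks_iff.mp hM.1
  -- hBC : Mxpᴴ = Mpx
  have hMxx : Mxx.PosDef := by
    refine Matrix.PosDef.of_dotProduct_mulVec_pos hxx fun x hx => ?_
    have hne : (Sum.elim x 0 : PS n) ≠ 0 := fun h =>
      hx (funext fun i => congrFun h (Sum.inl i))
    have := hM.dotProduct_mulVec_pos hne
    simpa [fromBlocks_mulVec, sumElim_dotProduct_sumElim] using this
  have hMpp : Mpp.PosDef := by
    refine Matrix.PosDef.of_dotProduct_mulVec_pos hpp fun p hp => ?_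
    have hne : (Sum.elim 0 p : PS n) ≠ 0 := fun h =>
      hp (funext fun i => congrFun h (Sum.inr i))
    have := hM.dotProduct_mulVec_pos hne
    simpa [fromBlocks_mulVec, sumElim_dotProduct_sumElim] using this
  haveI : Invertible Mxx := hMxx.isUnit.invertible
  haveI : Invertible Mpp := hMpp.isUnit.invertible
  -- rewrite Mpx as Mxpᴴ
  have hM' : Matrix.fromBlocks Mxx Mxp Mpx Mpp = Matrix.fromBlocks Mxx Mxp Mxpᴴ Mpp := by
    rw [hBC]
  -- quadratic form identity, projection onto x (Schur complement of Mpp)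
  have key₂₂ : ∀ (x p : Fin n → ℝ),
      (Matrix.fromBlocks Mxx Mxp Mpx Mpp) *ᵥ (Sum.elim x p) ⬝ᵥ (Sum.elim x p) =
        ((Mpp⁻¹ * Mxpᴴ) *ᵥ x + p) ⬝ᵥ Mpp *ᵥ ((Mpp⁻¹ * Mxpᴴ) *ᵥ x + p) +
          x ⬝ᵥ (Mxx - Mxp * Mpp⁻¹ * Mpx) *ᵥ x := by
    intro x p
    have := Matrix.schur_complement_eq₂₂ (α := ℝ) Mxx Mxp x p hpp
    simp only [star_trivial] at this
    rw [hM', dotProduct_comm, dotProduct_mulVec, this, ← hBC,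
      ← dotProduct_mulVec, ← dotProduct_mulVec]
  have key₁₁ : ∀ (x p : Fin n → ℝ),
      (Matrix.fromBlocks Mxx Mxp Mpx Mpp) *ᵥ (Sum.elim x p) ⬝ᵥ (Sum.elim x p) =
        (x + (Mxx⁻¹ * Mxp) *ᵥ p) ⬝ᵥ Mxx *ᵥ (x + (Mxx⁻¹ * Mxp) *ᵥ p) +
          p ⬝ᵥ (Mpp - Mpx * Mxx⁻¹ * Mxp) *ᵥ p := by
    intro x p
    have := Matrix.schur_complement_eq₁₁ (α := ℝ) Mxp Mpp x p hxx
    simp only [star_trivial] at this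
    rw [hM', dotProduct_comm, dotProduct_mulVec, this, ← hBC,
      ← dotProduct_mulVec, ← dotProduct_mulVec]
  constructor
  · ext x
    constructor
    · rintro ⟨z, hz, rfl⟩
      simp only [Set.mem_setOf_eq] at hz ⊢
      rw [← Sum.elim_comp_inl_inr z, key₂₂] at hz
      have h0 : 0 ≤ ((Mpp⁻¹ * Mxpᴴ) *ᵥ (z ∘ Sum.inl) + z ∘ Sum.inr) ⬝ᵥ
          Mpp *ᵥ ((Mpp⁻¹ * Mxpᴴ) *ᵥ (z ∘ Sum.inl) + z ∘ Sum.inr) := by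
        simpa using hMpp.posSemidef.dotProduct_mulVec_nonneg ((Mpp⁻¹ * Mxpᴴ) *ᵥ (z ∘ Sum.inl) + z ∘ Sum.inr)
      calc (Mxx - Mxp * Mpp⁻¹ * Mpx) *ᵥ (z ∘ Sum.inl) ⬝ᵥ (z ∘ Sum.inl)
          = (z ∘ Sum.inl) ⬝ᵥ (Mxx - Mxp * Mpp⁻¹ * Mpx) *ᵥ (z ∘ Sum.inl) := dotProduct_comm _ _
        _ ≤ ℏ := by linarith [hz, h0]
    · intro hx
      simp only [Set.mem_setOf_eq] at hx
      refine ⟨Sum.elim x (-((Mpp⁻¹ * Mxpᴴ) *ᵥ x)), ?_, by ext i; simp⟩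
      simp only [Set.mem_setOf_eq]
      rw [key₂₂]
      simp only [add_neg_cancel]
      rw [dotProduct_comm] at hx
      simpa using hx
  · ext p
    constructor
    · rintro ⟨z, hz, rfl⟩
      simp only [Set.mem_setOf_eq] at hz ⊢
      rw [← Sum.elim_comp_inl_inr z, key₁₁] at hz
      have h0 : 0 ≤ (z ∘ Sum.inl + (Mxx⁻¹ * Mxp) *ᵥ (z ∘ Sum.inr)) ⬝ᵥ
          Mxx *ᵥ (z ∘ Sum.inl + (Mxx⁻¹ * Mxp) *ᵥ (z ∘ Sum.inr)) := by
        simpa using hMxx.posSemidef.dotProduct_mulVec_nonneg (z ∘ Sum.inl + (Mxx⁻¹ * Mxp) *ᵥ (z ∘ Sum.inr))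
      calc (Mpp - Mpx * Mxx⁻¹ * Mxp) *ᵥ (z ∘ Sum.inr) ⬝ᵥ (z ∘ Sum.inr)
          = (z ∘ Sum.inr) ⬝ᵥ (Mpp - Mpx * Mxx⁻¹ * Mxp) *ᵥ (z ∘ Sum.inr) := dotProduct_comm _ _
        _ ≤ ℏ := by linarith [hz, h0]
    · intro hp
      simp only [Set.mem_setOf_eq] at hp
      refine ⟨Sum.elim (-((Mxx⁻¹ * Mxp) *ᵥ p)) p, ?_, by ext i; simp⟩
      simp only [Set.mem_setOf_eq]
      rw [key₁₁]
      simp only [neg_add_cancel]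
      rw [dotProduct_comm] at hp
      simpa using hp
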